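/- Let $a:\mathbb{R}\to(0,\infty)$ be continuous and $b$ locally bounded measurable, with $m(x)=\frac{1}{a(x)}e^{2B(x)}$ and $s(x)=e^{-2B(x)}$ where $B(x)=\int_0^x b(t)/a(t)\,dt$. Assume $\int_{\mathbb{R}} m(x)dx<\infty$. Then for any fixed $x\in\mathbb{R}$, the quantity $\int_x^{\infty} m(y)\Big(\int_x^y s(z)\int_{-\infty}^z m(w)\,dw\,dz\Big)dy$ is finite if and only if $\int_0^{\infty} m(x)\Big(\int_0^x s(y)\,dy\Big)dx < \infty$. -/

import Mathlib

open MeasureTheory Set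

/-- A measurable, locally bounded function is interval integrable on every interval. -/
lemma intInt_of_meas_bdd (f : ℝ → ℝ) (hf : Measurable f)
    (hbd : ∀ K : Set ℝ, IsCompact K → ∃ C, ∀ x ∈ K, |f x| ≤ C) :
    ∀ u v : ℝ, IntervalIntegrable f volume u v := by
  intro u v
  obtain ⟨C, hC⟩ := hbd (uIcc u v) isCompact_uIcc
  rw [intervalIntegrable_iff]
  have hconst : IntegrableOn (fun _ : ℝ => C) (uIoc u v) volume :=
    integrableOn_const measure_Ioc_lt_top.ne
  refine hconst.mono' hf.aestronglyMeasurable.restrict ?_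
  refine (ae_restrict_iff' measurableSet_uIoc).mpr (Filter.Eventually.of_forall fun t ht => ?_)
  simpa using hC t (uIoc_subset_uIcc ht)

/-- For a continuous function, integrability on `Ioi u` does not depend on `u`. -/
lemma integrableOn_Ioi_congr (f : ℝ → ℝ) (hf : Continuous f) (u v : ℝ) :
    IntegrableOn f (Ioi u) volume ↔ IntegrableOn f (Ioi v) volume := by
  have key : ∀ u v : ℝ, IntegrableOn f (Ioi u) volume → IntegrableOn f (Ioi v) volume := by
    intro u v h
    have hmin : IntegrableOn f (Ioi (min u v)) volume := by
      rw [← Ioc_union_Ioi_eq_Ioi (min_le_left u v)]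
      exact (hf.integrableOn_Ioc).union h
    exact hmin.mono_set (Ioi_subset_Ioi (min_le_right u v))
  exact ⟨key u v, key v u⟩

/-- The averaged hitting-time integral from above is finite iff the
entrance-boundary condition at `+∞` holds. -/
theorem stmt1 (a b B m s : ℝ → ℝ) (x : ℝ)
    (ha : Continuous a) (hapos : ∀ x, 0 < a x)
    (hbm : Measurable b)
    (hbloc : ∀ K : Set ℝ, IsCompact K → ∃ C, ∀ x ∈ K, |b x| ≤ C)
    (hB : ∀ x, B x = ∫ t in (0:ℝ)..x, b t / a t)
    (hm : ∀ x, m x = (a x)⁻¹ * Real.exp (2 * B x))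
    (hs : ∀ x, s x = Real.exp (-(2 * B x)))
    (hmint : Integrable m) :
    IntegrableOn (fun y => m y * ∫ z in x..y, s z * ∫ w in Iio z, m w) (Ioi x)
      ↔ IntegrableOn (fun x' => m x' * ∫ y in (0:ℝ)..x', s y) (Ioi 0) := by
  -- continuity of B
  have hba : ∀ u v : ℝ, IntervalIntegrable (fun t => b t / a t) volume u v := by
    apply intInt_of_meas_bdd _ (hbm.div ha.measurable)
    intro K hK
    rcases hbloc K hK with ⟨C, hC⟩
    rcases K.eq_empty_or_nonempty with rfl | hKe
    · exact ⟨0, fun t ht => absurd ht (notMem_empty t)⟩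
    obtain ⟨z, hz, hmin⟩ := hK.exists_isMinOn hKe ha.continuousOn
    refine ⟨C / a z, fun t ht => ?_⟩
    have h1 : a z ≤ a t := hmin ht
    have h2 : |b t / a t| = |b t| / a t := by
      rw [abs_div, abs_of_pos (hapos t)]
    rw [Pi.div_apply, h2]
    exact div_le_div₀ ((abs_nonneg _).trans (hC t ht)) (hC t ht) (hapos z) h1
  have hBc : Continuous B := by
    have : B = fun y => ∫ t in (0:ℝ)..y, b t / a t := funext hB
    rw [this]
    exact intervalIntegral.continuous_primitive hba 0
  have hmc : Continuous m := by
    have : m = fun y => (a y)⁻¹ * Real.exp (2 * B y) := funext hm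
    rw [this]
    exact (ha.inv₀ fun y => (hapos y).ne').mul ((continuous_const.mul hBc).rexp)
  have hsc : Continuous s := by
    have : s = fun y => Real.exp (-(2 * B y)) := funext hs
    rw [this]
    exact ((continuous_const.mul hBc).neg).rexp
  have hmpos : ∀ y, 0 < m y := fun y => by
    have := hapos y; rw [hm y]; positivity
  have hspos : ∀ y, 0 < s y := fun y => by
    rw [hs y]; positivity
  -- the cumulative mass
  set M : ℝ → ℝ := fun z => ∫ w in Iio z, m w with hMdef
  have hMmono : Monotone M := by
    intro z1 z2 h
    exact setIntegral_mono_set hmint.integrableOn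
      (Filter.Eventually.of_forall fun w => (hmpos w).le)
      (HasSubset.Subset.eventuallyLE (Iio_subset_Iio h))
  have hMmeas : Measurable M := hMmono.measurable
  set T : ℝ := ∫ w, m w with hTdef
  have hMle : ∀ z, M z ≤ T := fun z =>
    setIntegral_le_integral hmint (Filter.Eventually.of_forall fun w => (hmpos w).le)
  have hMnonneg : ∀ z, 0 ≤ M z := fun z =>
    setIntegral_nonneg measurableSet_Iio fun w _ => (hmpos w).le
  have hMxpos : 0 < M x := by
    rw [hMdef]
    rw [setIntegral_pos_iff_support_of_nonneg_ae
      (Filter.Eventually.of_forall fun w => (hmpos w).le) hmint.integrableOn]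
    have : Function.support m ∩ Iio x = Iio x := by
      apply inter_eq_self_of_subset_right
      intro w _
      exact (hmpos w).ne'
    rw [this]
    simp
  -- interval integrability of s*M
  have hg : ∀ u v : ℝ, IntervalIntegrable (fun z => s z * M z) volume u v := by
    apply intInt_of_meas_bdd _ (hsc.measurable.mul hMmeas)
    intro K hK
    obtain ⟨C, hC⟩ := hK.exists_bound_of_continuousOn hsc.continuousOn
    refine ⟨C * T, fun z hz => ?_⟩
    rw [Pi.mul_apply, abs_mul]
    have h1 : |s z| ≤ C := by simpa using hC z hz
    have h2 : |M z| ≤ T := by rw [abs_of_nonneg (hMnonneg z)]; exact hMle z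
    exact mul_le_mul h1 h2 (abs_nonneg _) ((abs_nonneg (s z)).trans h1)
  -- F and G
  set F : ℝ → ℝ := fun y => ∫ z in x..y, s z * M z with hFdef
  set G : ℝ → ℝ := fun y => ∫ z in x..y, s z with hGdef
  have hFcont : Continuous F := intervalIntegral.continuous_primitive hg x
  have hGcont : Continuous G :=
    intervalIntegral.continuous_primitive (fun u v => hsc.intervalIntegrable u v) x
  have hGnonneg : ∀ y ∈ Ioi x, 0 ≤ G y := by
    intro y hy
    exact intervalIntegral.integral_nonneg (le_of_lt hy) fun z _ => (hspos z).le
  have hFle : ∀ y ∈ Ioi x, F y ≤ T * G y := by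
    intro y hy
    have : F y ≤ ∫ z in x..y, T * s z := by
      apply intervalIntegral.integral_mono_on (le_of_lt hy) (hg x y)
        ((hsc.intervalIntegrable x y).const_mul T)
      intro z _
      rw [mul_comm (s z) (M z)]
      exact mul_le_mul_of_nonneg_right (hMle z) (hspos z).le
    rwa [intervalIntegral.integral_const_mul] at this
  have hFge : ∀ y ∈ Ioi x, M x * G y ≤ F y := by
    intro y hy
    have : (∫ z in x..y, M x * s z) ≤ F y := by
      apply intervalIntegral.integral_mono_on (le_of_lt hy)
        ((hsc.intervalIntegrable x y).const_mul (M x)) (hg x y)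
      intro z hz
      rw [mul_comm (s z) (M z)]
      exact mul_le_mul_of_nonneg_right (hMmono hz.1) (hspos z).le
    rwa [intervalIntegral.integral_const_mul] at this
  -- Step 1: mF integrable iff mG integrable on Ioi x
  have step1 : IntegrableOn (fun y => m y * F y) (Ioi x) volume
      ↔ IntegrableOn (fun y => m y * G y) (Ioi x) volume := by
    constructor
    · intro h
      refine Integrable.mono' (h.const_mul (M x)⁻¹) ((hmc.mul hGcont).aestronglyMeasurable.restrict) ?_
      refine (ae_restrict_iff' measurableSet_Ioi).mpr (Filter.Eventually.of_forall fun y hy => ?_)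
      rw [Real.norm_eq_abs, abs_of_nonneg (mul_nonneg (hmpos y).le (hGnonneg y hy))]
      rw [le_inv_mul_iff₀ hMxpos]
      calc M x * (m y * G y) = m y * (M x * G y) := by ring
        _ ≤ m y * F y := mul_le_mul_of_nonneg_left (hFge y hy) (hmpos y).le
    · intro h
      refine Integrable.mono' (h.const_mul T) ((hmc.mul hFcont).aestronglyMeasurable.restrict) ?_
      refine (ae_restrict_iff' measurableSet_Ioi).mpr (Filter.Eventually.of_forall fun y hy => ?_)
      have hF0 : 0 ≤ F y := le_trans (mul_nonneg hMxpos.le (hGnonneg y hy)) (hFge y hy)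
      rw [Real.norm_eq_abs, abs_of_nonneg (mul_nonneg (hmpos y).le hF0)]
      calc m y * F y ≤ m y * (T * G y) := mul_le_mul_of_nonneg_left (hFle y hy) (hmpos y).le
        _ = T * (m y * G y) := by ring
  -- Step 2: mG integrable on Ioi x iff mH integrable on Ioi x
  set H : ℝ → ℝ := fun y => ∫ z in (0:ℝ)..y, s z with hHdef
  have hHcont : Continuous H :=
    intervalIntegral.continuous_primitive (fun u v => hsc.intervalIntegrable u v) 0
  have hGH : ∀ y, G y = H y - H x := by
    intro y
    rw [hGdef, hHdef]
    simp only
    rw [eq_sub_iff_add_eq, add_comm, intervalIntegral.integral_add_adjacent_intervals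
      (hsc.intervalIntegrable 0 x) (hsc.intervalIntegrable x y)]
  have step2 : IntegrableOn (fun y => m y * G y) (Ioi x) volume
      ↔ IntegrableOn (fun y => m y * H y) (Ioi x) volume := by
    have hcm : IntegrableOn (fun y => m y * H x) (Ioi x) volume :=
      (hmint.mul_const (H x)).integrableOn
    constructor
    · intro h
      have h2 : IntegrableOn (fun y => m y * G y + m y * H x) (Ioi x) volume := h.add hcm
      refine h2.congr_fun (fun y _ => ?_) measurableSet_Ioi
      simp only [hGH y]; ring
    · intro h
      have h2 : IntegrableOn (fun y => m y * H y - m y * H x) (Ioi x) volume := h.sub hcm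
      refine h2.congr_fun (fun y _ => ?_) measurableSet_Ioi
      simp only [hGH y]; ring
  -- Step 3: domain shift
  have step3 : IntegrableOn (fun y => m y * H y) (Ioi x) volume
      ↔ IntegrableOn (fun y => m y * H y) (Ioi (0:ℝ)) volume :=
    integrableOn_Ioi_congr _ (hmc.mul hHcont) x 0
  exact step1.trans (step2.trans step3)
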